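/- If key_0 < ... < key_n and S is the exact set of adjacent distinction bit positions {D-bit(key_{k-1}, key_k)}, then restricting each key to S yields a strictly increasing sequence of compressed keys, and moreover for each adjacent pair the position of the first difference of the compressed keys, when mapped back via the increasing enumeration of S (the D-offset array), recovers the original distinction bit position: D-offset[D-bit(Compress(key_{i}), Compress(key_{i+1}))] = D-bit(key_i, key_{i+1}). -/

import Mathlib

/-- Lexicographic order on fixed-length bit strings (position 0 most significant). -/
def keyLt {m : ℕ} (x y : Fin m → Bool) : Prop :=
  ∃ i : Fin m, (∀ j : Fin m, j < i → x j = y j) ∧ x i < y i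

/-- Distinction bit position: the least position where `x` and `y` differ. -/
noncomputable def dbit {m : ℕ} (x y : Fin m → Bool) : ℕ :=
  sInf {i : ℕ | ∃ h : i < m, x ⟨i, h⟩ ≠ y ⟨i, h⟩}

/-- The first differing position of two lists. -/
noncomputable def firstDiff {α : Type*} (a b : List α) : ℕ :=
  sInf {i : ℕ | a[i]? ≠ b[i]?}

/-- The bits of `k` at the positions of `S`, in increasing order of position. -/
noncomputable def compress {m : ℕ} (S : Finset ℕ) (k : Fin m → Bool) : List Bool :=
  (S.sort (· ≤ ·)).map (fun i => if h : i < m then k ⟨i, h⟩ else false)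

lemma dbit_spec {m : ℕ} {x y : Fin m → Bool} (h : keyLt x y) :
    ∃ hm : dbit x y < m, x ⟨dbit x y, hm⟩ = false ∧ y ⟨dbit x y, hm⟩ = true ∧
      ∀ j : ℕ, j < dbit x y → ∀ hj : j < m, x ⟨j, hj⟩ = y ⟨j, hj⟩ := by
  obtain ⟨i, hpre, hlt⟩ := h
  rw [Bool.lt_iff] at hlt
  have hmem : (i : ℕ) ∈ {j : ℕ | ∃ h : j < m, x ⟨j, h⟩ ≠ y ⟨j, h⟩} :=
    ⟨i.isLt, by simp [hlt.1, hlt.2]⟩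
  have hne : {j : ℕ | ∃ h : j < m, x ⟨j, h⟩ ≠ y ⟨j, h⟩}.Nonempty := ⟨_, hmem⟩
  have hd := Nat.sInf_mem hne
  have hle : dbit x y ≤ i := Nat.sInf_le hmem
  have heq : dbit x y = (i : ℕ) := by
    rcases lt_or_eq_of_le hle with hlt' | hq
    · obtain ⟨hm, hneq⟩ := hd
      exact absurd (hpre ⟨dbit x y, hm⟩ hlt') hneq
    · exact hq
  refine ⟨heq ▸ i.isLt, ?_, ?_, ?_⟩
  · simp only [heq]; exact hlt.1
  · simp only [heq]; exact hlt.2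
  · intro j hj hjm
    by_contra hne'
    exact absurd (Nat.sInf_le (show j ∈ {i : ℕ | ∃ h : i < m, x ⟨i, h⟩ ≠ y ⟨i, h⟩} from ⟨hjm, hne'⟩)) (not_le.2 hj)

lemma lex_of_diff : ∀ (k : ℕ) (a b : List Bool),
    (∀ i < k, a[i]? = b[i]?) → a[k]? = some false → b[k]? = some true →
    List.Lex (· < ·) a b := by
  intro k
  induction k with
  | zero =>
    intro a b _ ha hb
    match a, b with
    | a0 :: a, b0 :: b =>
      simp at ha hb
      subst ha hb
      exact List.Lex.rel (by decide)
  | succ k ih =>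
    intro a b hpre ha hb
    match a, b with
    | a0 :: a, b0 :: b =>
      have h0 := hpre 0 (Nat.succ_pos k)
      simp at h0
      subst h0
      simp only [List.getElem?_cons_succ] at ha hb
      exact List.Lex.cons (ih a b (fun i hi => by simpa using hpre (i + 1) (by omega)) ha hb)

lemma pair_main {m : ℕ} {x y : Fin m → Bool} (h : keyLt x y) (S : Finset ℕ)
    (hdS : dbit x y ∈ S) :
    List.Lex (· < ·) (compress S x) (compress S y) ∧
    (S.sort (· ≤ ·))[firstDiff (compress S x) (compress S y)]? = some (dbit x y) := by
  obtain ⟨hm, hx, hy, hpre⟩ := dbit_spec h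
  set d := dbit x y with hdd
  set L := S.sort (· ≤ ·) with hL
  have hdL : d ∈ L := (Finset.mem_sort _).2 hdS
  set idx := L.idxOf d with hidx
  have hidxlt : idx < L.length := List.idxOf_lt_length_iff.2 hdL
  have hLidx : L.get ⟨idx, hidxlt⟩ = d := List.idxOf_get _
  have hgetidx : L[idx]? = some d := by
    rw [List.getElem?_eq_getElem hidxlt]
    simpa using hLidx
  -- entries before idx are < d
  have hbefore : ∀ j < idx, ∃ hj : j < L.length, L.get ⟨j, hj⟩ < d := by
    intro j hj
    have hjl : j < L.length := hj.trans hidxlt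
    refine ⟨hjl, ?_⟩
    have : L.get ⟨j, hjl⟩ < L.get ⟨idx, hidxlt⟩ := (Finset.sortedLT_sort S).strictMono_get
      (show (⟨j, hjl⟩ : Fin L.length) < ⟨idx, hidxlt⟩ from hj)
    rwa [hLidx] at this
  -- compressed entries
  have f_eq : ∀ j < idx, (compress S x)[j]? = (compress S y)[j]? := by
    intro j hj
    obtain ⟨hjl, hjd⟩ := hbefore j hj
    simp only [compress, List.getElem?_map]
    rw [List.getElem?_eq_getElem hjl]
    simp only [Option.map_some]
    congr 1
    by_cases hsm : L[j] < m
    · simp only [dif_pos hsm]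
      exact hpre _ (by simpa using hjd) hsm
    · simp [dif_neg hsm]
  have fx : (compress S x)[idx]? = some false := by
    simp only [compress, List.getElem?_map, hgetidx, Option.map_some]
    rw [show (S.sort fun x1 x2 => x1 ≤ x2)[idx]? = some d from hgetidx, Option.map_some]
    rw [dif_pos hm, hx]
  have fy : (compress S y)[idx]? = some true := by
    simp only [compress, List.getElem?_map, hgetidx, Option.map_some]
    rw [show (S.sort fun x1 x2 => x1 ≤ x2)[idx]? = some d from hgetidx, Option.map_some]
    rw [dif_pos hm, hy]
  have hfd : firstDiff (compress S x) (compress S y) = idx := by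
    have hmem : idx ∈ {i : ℕ | (compress S x)[i]? ≠ (compress S y)[i]?} := by
      simp [fx, fy]
    refine le_antisymm (Nat.sInf_le hmem) ?_
    by_contra hlt
    push_neg at hlt
    have hmem2 := Nat.sInf_mem ⟨_, hmem⟩
    exact hmem2 (f_eq _ hlt)
  constructor
  · exact lex_of_diff idx _ _ f_eq fx fy
  · rw [hfd]; exact hgetidx

/-- If S is the exact set of adjacent distinction bit positions, the compressed keys
are strictly increasing, and the D-offset array (the increasing enumeration of S)
maps the first differing position of adjacent compressed keys back to the original
distinction bit position. -/

theorem doffset_recovers_dbit {m n : ℕ} (key : ℕ → Fin m → Bool)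
    (hinc : ∀ k < n, keyLt (key k) (key (k + 1)))
    (S : Finset ℕ)
    (hS : (S : Set ℕ)
      = {d : ℕ | ∃ k : ℕ, 1 ≤ k ∧ k ≤ n ∧ d = dbit (key (k - 1)) (key k)}) :
    (∀ k : ℕ, 1 ≤ k → k ≤ n →
      List.Lex (· < ·) (compress S (key (k - 1))) (compress S (key k))) ∧
    (∀ i : ℕ, i < n →
      (S.sort (· ≤ ·))[firstDiff (compress S (key i)) (compress S (key (i + 1)))]?
        = some (dbit (key i) (key (i + 1)))) := by
  have hkey : ∀ k : ℕ, 1 ≤ k → k ≤ n → keyLt (key (k - 1)) (key k) := by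
    intro k h1 h2
    have := hinc (k - 1) (by omega)
    rwa [show k - 1 + 1 = k by omega] at this
  have hmemS : ∀ k : ℕ, 1 ≤ k → k ≤ n → dbit (key (k - 1)) (key k) ∈ S := by
    intro k h1 h2
    have : dbit (key (k - 1)) (key k) ∈ (S : Set ℕ) := by
      rw [hS]; exact ⟨k, h1, h2, rfl⟩
    exact_mod_cast this
  constructor
  · intro k h1 h2
    exact (pair_main (hkey k h1 h2) S (hmemS k h1 h2)).1
  · intro i hi
    have h := pair_main (x := key i) (y := key (i + 1))
      (by simpa using hkey (i + 1) (by omega) (by omega)) S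
      (by simpa using hmemS (i + 1) (by omega) (by omega))
    exact h.2
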